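/- Fix d ≥ 1, a nonzero vector μ ∈ ℝ^d, σ > 0, and p ∈ (1/2, 1). Let D be the distribution on ℝ^d × {−1,+1} where Y is uniform on {−1,+1}, X given Y=+1 is N(μ, σ²I), and X given Y=−1 is the mixture p·N(−μ, σ²I) + (1−p)·N(3μ, σ²I). Let h^LDA be the classifier that outputs +1 iff ‖x − μ‖ ≤ ‖x + (4p−3)μ‖, and let h^MDA be the classifier that outputs +1 iff f(x; μ, σ²I) ≥ p·f(x; −μ, σ²I) and f(x; μ, σ²I) ≥ (1−p)·f(x; 3μ, σ²I), where f(·; m, σ²I) is the N(m, σ²I) density. Then Pr_{(X,Y)∼D}[h^LDA(X) ≠ Y] − Pr_{(X,Y)∼D}[h^MDA(X) ≠ Y] ≥ (1−p)/2 − exp(−‖μ‖²/(2σ²)). -/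

import Mathlib

open MeasureTheory Real Set ProbabilityTheory
open scoped ENNReal RealInnerProductSpace

/-- The standard normal cumulative distribution function
`Φ(z) = ∫_{−∞}^z (1/√(2π)) e^{−u²/2} du`. -/
noncomputable def stdNormCDF (z : ℝ) : ℝ :=
  ∫ u in Set.Iic z, (1 / Real.sqrt (2 * Real.pi)) * Real.exp (-u ^ 2 / 2)
/-- Density of the `d`-dimensional Gaussian `N(m, σ²I)`:
`f(x; m, σ²I) = (2πσ²)^{−d/2} exp(−‖x−m‖²/(2σ²))`. -/
noncomputable def gaussPdf (d : ℕ) (m : EuclideanSpace ℝ (Fin d)) (σ : ℝ)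
    (x : EuclideanSpace ℝ (Fin d)) : ℝ :=
  (2 * Real.pi * σ ^ 2) ^ (-(d : ℝ) / 2) * Real.exp (-‖x - m‖ ^ 2 / (2 * σ ^ 2))

/-- The `d`-dimensional Gaussian measure `N(m, σ²I)` on `ℝ^d`. -/
noncomputable def gauss (d : ℕ) (m : EuclideanSpace ℝ (Fin d)) (σ : ℝ) :
    Measure (EuclideanSpace ℝ (Fin d)) :=
  volume.withDensity fun x => ENNReal.ofReal (gaussPdf d m σ x)
/-- The data-generating distribution `D` on `ℝ^d × {−1,+1}` (labels embedded in `ℝ`):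
`Y` is uniform on `{−1,+1}`, `X | Y=+1 ∼ N(μ, σ²I)`, and
`X | Y=−1 ∼ p·N(−μ, σ²I) + (1−p)·N(3μ, σ²I)`. -/
noncomputable def Dmix (d : ℕ) (μv : EuclideanSpace ℝ (Fin d)) (σ p : ℝ) :
    Measure (EuclideanSpace ℝ (Fin d) × ℝ) :=
  ENNReal.ofReal (1 / 2) • (gauss d μv σ).map (fun x => (x, (1 : ℝ)))
    + ENNReal.ofReal (p / 2) • (gauss d (-μv) σ).map (fun x => (x, (-1 : ℝ)))
    + ENNReal.ofReal ((1 - p) / 2) • (gauss d ((3 : ℝ) • μv) σ).map (fun x => (x, (-1 : ℝ)))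
/-- The LDA classifier with centers `μ` and `μ₋ = −(4p−3)μ`: outputs `+1`
iff `‖x − μ‖ ≤ ‖x − μ₋‖`. -/
noncomputable def hLDA (d : ℕ) (μv : EuclideanSpace ℝ (Fin d)) (p : ℝ)
    (x : EuclideanSpace ℝ (Fin d)) : ℝ :=
  if ‖x - μv‖ ≤ ‖x - (-(4 * p - 3)) • μv‖ then 1 else -1
/-- The MDA classifier: outputs `+1` iff `f(x; μ, σ²I) ≥ p·f(x; −μ, σ²I)` and
`f(x; μ, σ²I) ≥ (1−p)·f(x; 3μ, σ²I)`. -/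
noncomputable def hMDA (d : ℕ) (μv : EuclideanSpace ℝ (Fin d)) (σ p : ℝ)
    (x : EuclideanSpace ℝ (Fin d)) : ℝ :=
  if p * gaussPdf d (-μv) σ x ≤ gaussPdf d μv σ x ∧
      (1 - p) * gaussPdf d ((3 : ℝ) • μv) σ x ≤ gaussPdf d μv σ x then 1 else -1

section LdaMdaAux

open GaussianFourier

variable {d : ℕ} {σ : ℝ}

lemma gaussPdf_continuous (m : EuclideanSpace ℝ (Fin d)) (σ : ℝ) :
    Continuous (gaussPdf d m σ) := by
  unfold gaussPdf; fun_prop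

lemma gaussPdf_pos (hσ : 0 < σ) (m x) : 0 < gaussPdf d m σ x :=
  mul_pos (Real.rpow_pos_of_pos (by nlinarith [Real.pi_pos, pow_pos hσ 2]) _) (Real.exp_pos _)

lemma gaussPdf_integrable (hσ : 0 < σ) (m : EuclideanSpace ℝ (Fin d)) :
    Integrable (gaussPdf d m σ) := by
  have hb : (0:ℝ) < (2 * σ ^ 2)⁻¹ := by positivity
  have h0 : Integrable (fun v : EuclideanSpace ℝ (Fin d) => rexp (-(2 * σ ^ 2)⁻¹ * ‖v‖^2)) := by
    have h := (integrable_cexp_neg_mul_sq_norm_add (V := EuclideanSpace ℝ (Fin d))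
      (b := ((2 * σ ^ 2)⁻¹ : ℝ)) (by simpa only [Complex.ofReal_re] using hb) 0 0).re
    refine h.congr (Filter.Eventually.of_forall fun v => ?_)
    simp [← Complex.ofReal_pow, ← Complex.ofReal_mul, ← Complex.ofReal_neg,
      Complex.exp_ofReal_re]
  have h1 : Integrable (fun v : EuclideanSpace ℝ (Fin d) => rexp (-(2 * σ ^ 2)⁻¹ * ‖v - m‖^2)) :=
    h0.comp_sub_right m
  have h2 := h1.const_mul ((2 * Real.pi * σ ^ 2) ^ (-(d : ℝ) / 2))
  refine h2.congr (Filter.Eventually.of_forall fun v => ?_)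
  unfold gaussPdf
  ring_nf

lemma integral_gaussPdf (hσ : 0 < σ) (m : EuclideanSpace ℝ (Fin d)) :
    ∫ x, gaussPdf d m σ x = 1 := by
  have hb : (0:ℝ) < (2 * σ ^ 2)⁻¹ := by positivity
  have key : ∫ v : EuclideanSpace ℝ (Fin d), rexp (-(2 * σ ^ 2)⁻¹ * ‖v‖^2)
      = (Real.pi / (2 * σ ^ 2)⁻¹) ^ ((Module.finrank ℝ (EuclideanSpace ℝ (Fin d)) : ℝ) / 2) :=
    integral_rexp_neg_mul_sq_norm hb
  have hfr : (Module.finrank ℝ (EuclideanSpace ℝ (Fin d)) : ℝ) = (d : ℝ) := by simp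
  unfold gaussPdf
  rw [integral_const_mul]
  have : ∫ x : EuclideanSpace ℝ (Fin d), rexp (-‖x - m‖ ^ 2 / (2 * σ ^ 2))
      = ∫ x : EuclideanSpace ℝ (Fin d), rexp (-(2 * σ ^ 2)⁻¹ * ‖x - m‖^2) := by
    congr 1; ext x; ring_nf
  rw [this, integral_sub_right_eq_self (fun v : EuclideanSpace ℝ (Fin d) =>
    rexp (-(2 * σ ^ 2)⁻¹ * ‖v‖^2)) m, key, hfr]
  have hbase : Real.pi / (2 * σ ^ 2)⁻¹ = 2 * Real.pi * σ ^ 2 := by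
    field_simp
  rw [hbase, ← Real.rpow_add (by nlinarith [Real.pi_pos, pow_pos hσ 2])]
  rw [neg_div, neg_add_cancel, Real.rpow_zero]

lemma gauss_apply (m : EuclideanSpace ℝ (Fin d)) {S : Set (EuclideanSpace ℝ (Fin d))}
    (hS : MeasurableSet S) :
    gauss d m σ S = ∫⁻ x in S, ENNReal.ofReal (gaussPdf d m σ x) :=
  withDensity_apply _ hS

lemma gauss_univ (hσ : 0 < σ) (m : EuclideanSpace ℝ (Fin d)) :
    gauss d m σ Set.univ = 1 := by
  rw [gauss_apply m MeasurableSet.univ, Measure.restrict_univ,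
    ← ofReal_integral_eq_lintegral_ofReal (gaussPdf_integrable hσ m)
      (Filter.Eventually.of_forall fun x => (gaussPdf_pos hσ m x).le),
    integral_gaussPdf hσ m, ENNReal.ofReal_one]

lemma gauss_le_one (hσ : 0 < σ) (m : EuclideanSpace ℝ (Fin d))
    (S : Set (EuclideanSpace ℝ (Fin d))) : gauss d m σ S ≤ 1 := by
  rw [← gauss_univ hσ m]; exact measure_mono (subset_univ S)

lemma gauss_ne_top (hσ : 0 < σ) (m : EuclideanSpace ℝ (Fin d))
    (S : Set (EuclideanSpace ℝ (Fin d))) : gauss d m σ S ≠ ⊤ :=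
  fun h => by simpa [h] using gauss_le_one hσ m S

lemma gauss_toReal_le_one (hσ : 0 < σ) (m : EuclideanSpace ℝ (Fin d))
    (S : Set (EuclideanSpace ℝ (Fin d))) : (gauss d m σ S).toReal ≤ 1 := by
  have := ENNReal.toReal_mono (by norm_num) (gauss_le_one hσ m S)
  simpa using this

lemma gauss_compl_toReal (hσ : 0 < σ) (m : EuclideanSpace ℝ (Fin d))
    {S : Set (EuclideanSpace ℝ (Fin d))} (hS : MeasurableSet S) :
    (gauss d m σ Sᶜ).toReal = 1 - (gauss d m σ S).toReal := by
  have h := measure_add_measure_compl (μ := gauss d m σ) hS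
  rw [gauss_univ hσ m] at h
  have h1 := gauss_ne_top hσ m S
  have h2 := gauss_ne_top hσ m Sᶜ
  have := congrArg ENNReal.toReal h
  rw [ENNReal.toReal_add h1 h2] at this
  simp at this
  linarith

lemma gauss_union_toReal (hσ : 0 < σ) (m : EuclideanSpace ℝ (Fin d))
    {S T : Set (EuclideanSpace ℝ (Fin d))} (hd : Disjoint S T) (hT : MeasurableSet T) :
    (gauss d m σ (S ∪ T)).toReal = (gauss d m σ S).toReal + (gauss d m σ T).toReal := by
  rw [measure_union hd hT, ENNReal.toReal_add (gauss_ne_top hσ m S) (gauss_ne_top hσ m T)]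

/-- comparison: if `c₁ f₁ ≤ c₂ f₂` pointwise on `S` then same for measures. -/
lemma gauss_comp_toReal (hσ : 0 < σ) {c₁ c₂ : ℝ} (hc₁ : 0 ≤ c₁) (hc₂ : 0 ≤ c₂)
    (m₁ m₂ : EuclideanSpace ℝ (Fin d)) {S : Set (EuclideanSpace ℝ (Fin d))}
    (hS : MeasurableSet S)
    (h : ∀ x ∈ S, c₁ * gaussPdf d m₁ σ x ≤ c₂ * gaussPdf d m₂ σ x) :
    c₁ * (gauss d m₁ σ S).toReal ≤ c₂ * (gauss d m₂ σ S).toReal := by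
  have key : ENNReal.ofReal c₁ * gauss d m₁ σ S ≤ ENNReal.ofReal c₂ * gauss d m₂ σ S := by
    rw [gauss_apply m₁ hS, gauss_apply m₂ hS, ← lintegral_const_mul' _ _ ENNReal.ofReal_ne_top,
      ← lintegral_const_mul' _ _ ENNReal.ofReal_ne_top]
    refine setLIntegral_mono' hS fun x hx => ?_
    rw [← ENNReal.ofReal_mul hc₁, ← ENNReal.ofReal_mul hc₂]
    exact ENNReal.ofReal_le_ofReal (h x hx)
  have := ENNReal.toReal_mono ?fin key
  · rwa [ENNReal.toReal_mul, ENNReal.toReal_mul, ENNReal.toReal_ofReal hc₁,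
      ENNReal.toReal_ofReal hc₂] at this
  · exact ENNReal.mul_ne_top ENNReal.ofReal_ne_top (gauss_ne_top hσ m₂ S)

lemma pdf_le_iff (hσ : 0 < σ) {c₁ c₂ : ℝ} (h₁ : 0 < c₁) (h₂ : 0 < c₂)
    (m₁ m₂ x : EuclideanSpace ℝ (Fin d)) :
    c₁ * gaussPdf d m₁ σ x ≤ c₂ * gaussPdf d m₂ σ x ↔
      Real.log c₁ - ‖x - m₁‖ ^ 2 / (2 * σ ^ 2) ≤
        Real.log c₂ - ‖x - m₂‖ ^ 2 / (2 * σ ^ 2) := by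
  unfold gaussPdf
  have hZ : 0 < (2 * Real.pi * σ ^ 2) ^ (-(d:ℝ)/2) :=
    Real.rpow_pos_of_pos (by nlinarith [Real.pi_pos, pow_pos hσ 2]) _
  rw [mul_left_comm c₁, mul_left_comm c₂, mul_le_mul_iff_right₀ hZ]
  nth_rewrite 1 [← Real.exp_log h₁]
  nth_rewrite 1 [← Real.exp_log h₂]
  rw [← Real.exp_add, ← Real.exp_add, Real.exp_le_exp, neg_div, neg_div]
  constructor <;> intro h <;> linarith

lemma norm_sub_smul_sq (x μv : EuclideanSpace ℝ (Fin d)) (a : ℝ) :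
    ‖x - a • μv‖ ^ 2 = ‖x‖ ^ 2 - 2 * a * ⟪x, μv⟫ + a ^ 2 * ‖μv‖ ^ 2 := by
  rw [norm_sub_sq_real, real_inner_smul_right, norm_smul]
  rw [mul_pow]
  simp only [Real.norm_eq_abs, sq_abs]
  ring

lemma exponent_helper {s L1 L2 E1 E2 : ℝ} (hs : 0 < s) (h : E2 - E1 ≤ s * (L2 - L1)) :
    L1 - E1 / s ≤ L2 - E2 / s := by
  have h2 : (E2 - E1) / s ≤ L2 - L1 := by
    rw [div_le_iff₀ hs]; linarith
  rw [sub_div] at h2; linarith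

lemma exponent_helper' {s L1 L2 E1 E2 : ℝ} (hs : 0 < s) (h : L1 - E1 / s ≤ L2 - E2 / s) :
    E2 - E1 ≤ s * (L2 - L1) := by
  have h2 : (E2 - E1) / s ≤ L2 - L1 := by rw [sub_div]; linarith
  rw [div_le_iff₀ hs] at h2; linarith

section Pointwise

variable {p : ℝ} {μv x : EuclideanSpace ℝ (Fin d)}

/-- `x ∈ C → x ∈ A`. -/
lemma ptCA (hσ : 0 < σ) (hμ : μv ≠ 0) (hp1 : 1 / 2 < p) (hp2 : p < 1)
    (hx : ‖x - μv‖ ≤ ‖x - (-(4 * p - 3)) • μv‖) :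
    p * gaussPdf d (-μv) σ x ≤ gaussPdf d μv σ x := by
  have hp0 : 0 < p := by linarith
  have hm : 0 < ‖μv‖ ^ 2 := pow_pos (norm_pos_iff.2 hμ) 2
  have hs : 0 < 2 * σ ^ 2 := by positivity
  have e1 := norm_sub_smul_sq x μv 1
  rw [one_smul] at e1
  have em1 := norm_sub_smul_sq x μv (-1)
  rw [neg_one_smul] at em1
  have eF := norm_sub_smul_sq x μv (-(4 * p - 3))
  have hx2 : ‖x - μv‖ ^ 2 ≤ ‖x - (-(4 * p - 3)) • μv‖ ^ 2 :=
    pow_le_pow_left₀ (norm_nonneg _) hx 2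
  rw [e1, eF] at hx2
  have ht : 0 ≤ ⟪x, μv⟫ := by
    nlinarith [mul_pos (mul_pos (show (0:ℝ) < 4 - 4 * p by linarith)
      (show (0:ℝ) < 4 * p - 2 by linarith)) hm]
  rw [show gaussPdf d μv σ x = 1 * gaussPdf d μv σ x from (one_mul _).symm,
    pdf_le_iff hσ hp0 one_pos, Real.log_one]
  apply exponent_helper hs
  rw [e1, em1]
  have hlogp : Real.log p < 0 := Real.log_neg hp0 hp2
  nlinarith [mul_pos hs (neg_pos.2 hlogp)]

/-- `x ∉ B → x ∈ C`. -/
lemma ptBC (hσ : 0 < σ) (hμ : μv ≠ 0) (hp1 : 1 / 2 < p) (hp2 : p < 1)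
    (hx : ¬ (1 - p) * gaussPdf d ((3 : ℝ) • μv) σ x ≤ gaussPdf d μv σ x) :
    ‖x - μv‖ ≤ ‖x - (-(4 * p - 3)) • μv‖ := by
  have hq0 : 0 < 1 - p := by linarith
  have hm : 0 < ‖μv‖ ^ 2 := pow_pos (norm_pos_iff.2 hμ) 2
  have hs : 0 < 2 * σ ^ 2 := by positivity
  have e1 := norm_sub_smul_sq x μv 1
  rw [one_smul] at e1
  have e3 := norm_sub_smul_sq x μv 3
  have eF := norm_sub_smul_sq x μv (-(4 * p - 3))
  have hx' : 1 * gaussPdf d μv σ x ≤ (1 - p) * gaussPdf d ((3 : ℝ) • μv) σ x := by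
    rw [one_mul]; exact (not_le.1 hx).le
  rw [pdf_le_iff hσ one_pos hq0, Real.log_one] at hx'
  have hEq := exponent_helper' hs hx'
  rw [e1, e3] at hEq
  have hlogq : Real.log (1 - p) < 0 := Real.log_neg hq0 (by linarith)
  have hslog : (2 * σ ^ 2) * Real.log (1 - p) < 0 := mul_neg_of_pos_of_neg hs hlogq
  have ht : 2 * ‖μv‖ ^ 2 < ⟪x, μv⟫ := by nlinarith
  have hsq : ‖x - μv‖ ^ 2 ≤ ‖x - (-(4 * p - 3)) • μv‖ ^ 2 := by
    rw [e1, eF]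
    nlinarith [mul_pos (show (0:ℝ) < 4 * p - 2 by linarith)
      (show (0:ℝ) < ⟪x, μv⟫ - 2 * ‖μv‖ ^ 2 by linarith),
      mul_pos (mul_pos (show (0:ℝ) < 4 * p - 2 by linarith) hm)
        (show (0:ℝ) < 4 * p by linarith)]
  calc ‖x - μv‖ = Real.sqrt (‖x - μv‖ ^ 2) := (Real.sqrt_sq (norm_nonneg _)).symm
    _ ≤ Real.sqrt (‖x - (-(4 * p - 3)) • μv‖ ^ 2) := Real.sqrt_le_sqrt hsq
    _ = ‖x - (-(4 * p - 3)) • μv‖ := Real.sqrt_sq (norm_nonneg _)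

/-- `x ∉ B`: `f₁ ≤ √(1-p)·e^{-K}·f₂`. -/
lemma ptB1 (hσ : 0 < σ) (hp2 : p < 1)
    (hx : ¬ (1 - p) * gaussPdf d ((3 : ℝ) • μv) σ x ≤ gaussPdf d μv σ x) :
    gaussPdf d μv σ x ≤ (Real.sqrt (1 - p) * Real.exp (-‖μv‖ ^ 2 / (2 * σ ^ 2))) *
      gaussPdf d ((2 : ℝ) • μv) σ x := by
  have hq0 : 0 < 1 - p := by linarith
  have hs : 0 < 2 * σ ^ 2 := by positivity
  have hc2 : 0 < Real.sqrt (1 - p) * Real.exp (-‖μv‖ ^ 2 / (2 * σ ^ 2)) :=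
    mul_pos (Real.sqrt_pos.2 hq0) (Real.exp_pos _)
  have e1 := norm_sub_smul_sq x μv 1
  rw [one_smul] at e1
  have e2 := norm_sub_smul_sq x μv 2
  have e3 := norm_sub_smul_sq x μv 3
  have hx' : 1 * gaussPdf d μv σ x ≤ (1 - p) * gaussPdf d ((3 : ℝ) • μv) σ x := by
    rw [one_mul]; exact (not_le.1 hx).le
  rw [pdf_le_iff hσ one_pos hq0, Real.log_one] at hx'
  have hEq := exponent_helper' hs hx'
  rw [e1, e3] at hEq
  rw [show gaussPdf d μv σ x = 1 * gaussPdf d μv σ x from (one_mul _).symm,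
    pdf_le_iff hσ one_pos hc2, Real.log_one,
    Real.log_mul (ne_of_gt (Real.sqrt_pos.2 hq0)) (Real.exp_ne_zero _),
    Real.log_sqrt hq0.le, Real.log_exp]
  apply exponent_helper hs
  rw [e1, e2]
  have hrhs : 2 * σ ^ 2 * (Real.log (1 - p) / 2 + -‖μv‖ ^ 2 / (2 * σ ^ 2) - 0)
      = σ ^ 2 * Real.log (1 - p) - ‖μv‖ ^ 2 := by
    field_simp; ring
  rw [hrhs]
  nlinarith

/-- `x ∈ B`: `(1-p)·f₃ ≤ √(1-p)·e^{-K}·f₂`. -/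
lemma ptB3 (hσ : 0 < σ) (hp2 : p < 1)
    (hx : (1 - p) * gaussPdf d ((3 : ℝ) • μv) σ x ≤ gaussPdf d μv σ x) :
    (1 - p) * gaussPdf d ((3 : ℝ) • μv) σ x ≤
      (Real.sqrt (1 - p) * Real.exp (-‖μv‖ ^ 2 / (2 * σ ^ 2))) *
        gaussPdf d ((2 : ℝ) • μv) σ x := by
  have hq0 : 0 < 1 - p := by linarith
  have hs : 0 < 2 * σ ^ 2 := by positivity
  have hc2 : 0 < Real.sqrt (1 - p) * Real.exp (-‖μv‖ ^ 2 / (2 * σ ^ 2)) :=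
    mul_pos (Real.sqrt_pos.2 hq0) (Real.exp_pos _)
  have e1 := norm_sub_smul_sq x μv 1
  rw [one_smul] at e1
  have e2 := norm_sub_smul_sq x μv 2
  have e3 := norm_sub_smul_sq x μv 3
  have hx' : (1 - p) * gaussPdf d ((3 : ℝ) • μv) σ x ≤ 1 * gaussPdf d μv σ x := by
    rw [one_mul]; exact hx
  rw [pdf_le_iff hσ hq0 one_pos, Real.log_one] at hx'
  have hEq := exponent_helper' hs hx'
  rw [e1, e3] at hEq
  rw [pdf_le_iff hσ hq0 hc2,
    Real.log_mul (ne_of_gt (Real.sqrt_pos.2 hq0)) (Real.exp_ne_zero _),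
    Real.log_sqrt hq0.le, Real.log_exp]
  apply exponent_helper hs
  rw [e2, e3]
  have hrhs : 2 * σ ^ 2 * (Real.log (1 - p) / 2 + -‖μv‖ ^ 2 / (2 * σ ^ 2) - Real.log (1 - p))
      = -(σ ^ 2 * Real.log (1 - p)) - ‖μv‖ ^ 2 := by
    field_simp; ring
  rw [hrhs]
  nlinarith

/-- `x ∉ C`: `f₃ ≤ e^{-3K}·f₂`. -/
lemma ptC3 (hσ : 0 < σ) (hμ : μv ≠ 0) (hp1 : 1 / 2 < p) (hp2 : p < 1)
    (hx : ¬ ‖x - μv‖ ≤ ‖x - (-(4 * p - 3)) • μv‖) :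
    gaussPdf d ((3 : ℝ) • μv) σ x ≤
      Real.exp (-(3 * ‖μv‖ ^ 2) / (2 * σ ^ 2)) * gaussPdf d ((2 : ℝ) • μv) σ x := by
  have hm : 0 < ‖μv‖ ^ 2 := pow_pos (norm_pos_iff.2 hμ) 2
  have hs : 0 < 2 * σ ^ 2 := by positivity
  have e1 := norm_sub_smul_sq x μv 1
  rw [one_smul] at e1
  have e2 := norm_sub_smul_sq x μv 2
  have e3 := norm_sub_smul_sq x μv 3
  have eF := norm_sub_smul_sq x μv (-(4 * p - 3))
  have hx2 : ‖x - (-(4 * p - 3)) • μv‖ ^ 2 ≤ ‖x - μv‖ ^ 2 :=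
    pow_le_pow_left₀ (norm_nonneg _) (not_le.1 hx).le 2
  rw [e1, eF] at hx2
  have ht : ⟪x, μv⟫ ≤ ‖μv‖ ^ 2 := by
    nlinarith [mul_pos (show (0:ℝ) < 4 * p - 2 by linarith) hm]
  rw [show gaussPdf d ((3:ℝ) • μv) σ x = 1 * gaussPdf d ((3:ℝ) • μv) σ x from (one_mul _).symm,
    pdf_le_iff hσ one_pos (Real.exp_pos _), Real.log_one, Real.log_exp]
  apply exponent_helper hs
  rw [e2, e3]
  have hrhs : 2 * σ ^ 2 * (-(3 * ‖μv‖ ^ 2) / (2 * σ ^ 2) - 0) = -(3 * ‖μv‖ ^ 2) := by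
    field_simp; ring
  rw [hrhs]
  nlinarith

end Pointwise

lemma Dmix_err {p : ℝ} (hσ : 0 < σ) (hp0 : 0 ≤ p) (hp2 : p ≤ 1)
    (μv : EuclideanSpace ℝ (Fin d)) {h : EuclideanSpace ℝ (Fin d) → ℝ}
    {S : Set (EuclideanSpace ℝ (Fin d))} (hS : MeasurableSet S)
    (hpos : ∀ x, x ∈ S → h x = 1) (hneg : ∀ x, x ∉ S → h x = -1) :
    (Dmix d μv σ p {z | h z.1 ≠ z.2}).toReal
      = 1 / 2 * (gauss d μv σ Sᶜ).toReal + p / 2 * (gauss d (-μv) σ S).toReal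
        + (1 - p) / 2 * (gauss d ((3 : ℝ) • μv) σ S).toReal := by
  have hE : {z : EuclideanSpace ℝ (Fin d) × ℝ | h z.1 ≠ z.2}
      = (S ×ˢ ({(1 : ℝ)}ᶜ)) ∪ (Sᶜ ×ˢ ({(-1 : ℝ)}ᶜ)) := by
    ext ⟨x, y⟩
    by_cases hxS : x ∈ S
    · simp [Set.mem_setOf_eq, hpos x hxS, hxS, eq_comm]
    · simp [Set.mem_setOf_eq, hneg x hxS, hxS, eq_comm]
  have hEm : MeasurableSet {z : EuclideanSpace ℝ (Fin d) × ℝ | h z.1 ≠ z.2} := by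
    rw [hE]
    exact (hS.prod (measurableSet_singleton 1).compl).union
      (hS.compl.prod (measurableSet_singleton (-1)).compl)
  have pre1 : (fun x : EuclideanSpace ℝ (Fin d) => (x, (1 : ℝ))) ⁻¹'
      {z : EuclideanSpace ℝ (Fin d) × ℝ | h z.1 ≠ z.2} = Sᶜ := by
    ext x
    by_cases hxS : x ∈ S
    · simp [Set.mem_setOf_eq, hpos x hxS, hxS]
    · simp only [Set.mem_preimage, Set.mem_setOf_eq, hneg x hxS, Set.mem_compl_iff, hxS]
      norm_num
  have prem1 : (fun x : EuclideanSpace ℝ (Fin d) => (x, (-1 : ℝ))) ⁻¹'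
      {z : EuclideanSpace ℝ (Fin d) × ℝ | h z.1 ≠ z.2} = S := by
    ext x
    by_cases hxS : x ∈ S
    · simp only [Set.mem_preimage, Set.mem_setOf_eq, hpos x hxS, hxS, iff_true]
      norm_num
    · simp [Set.mem_setOf_eq, hneg x hxS, hxS]
  rw [Dmix, Measure.add_apply, Measure.add_apply, Measure.smul_apply, Measure.smul_apply,
    Measure.smul_apply, smul_eq_mul, smul_eq_mul, smul_eq_mul,
    Measure.map_apply measurable_prodMk_right hEm,
    Measure.map_apply measurable_prodMk_right hEm,
    Measure.map_apply measurable_prodMk_right hEm, pre1, prem1]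
  have f1 : ENNReal.ofReal (1/2) * gauss d μv σ Sᶜ ≠ ⊤ :=
    ENNReal.mul_ne_top ENNReal.ofReal_ne_top (gauss_ne_top hσ _ _)
  have f2 : ENNReal.ofReal (p/2) * gauss d (-μv) σ S ≠ ⊤ :=
    ENNReal.mul_ne_top ENNReal.ofReal_ne_top (gauss_ne_top hσ _ _)
  have f3 : ENNReal.ofReal ((1-p)/2) * gauss d ((3:ℝ) • μv) σ S ≠ ⊤ :=
    ENNReal.mul_ne_top ENNReal.ofReal_ne_top (gauss_ne_top hσ _ _)
  rw [ENNReal.toReal_add (ENNReal.add_ne_top.2 ⟨f1, f2⟩) f3, ENNReal.toReal_add f1 f2,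
    ENNReal.toReal_mul, ENNReal.toReal_mul, ENNReal.toReal_mul,
    ENNReal.toReal_ofReal (by norm_num : (0:ℝ) ≤ 1/2),
    ENNReal.toReal_ofReal (by linarith : (0:ℝ) ≤ p/2),
    ENNReal.toReal_ofReal (by linarith : (0:ℝ) ≤ (1-p)/2)]


end LdaMdaAux

set_option maxHeartbeats 1000000 in
/-- The performance gap between the ideal LDA and MDA classifiers under the
Gaussian-mixture data model `D`. -/
theorem lda_mda_gap (d : ℕ) (hd : 1 ≤ d) (μv : EuclideanSpace ℝ (Fin d)) (hμ : μv ≠ 0)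
    (σ p : ℝ) (hσ : 0 < σ) (hp1 : 1 / 2 < p) (hp2 : p < 1) :
    ((Dmix d μv σ p) {z | hLDA d μv p z.1 ≠ z.2}).toReal
        - ((Dmix d μv σ p) {z | hMDA d μv σ p z.1 ≠ z.2}).toReal ≥
      (1 - p) / 2 - Real.exp (-‖μv‖ ^ 2 / (2 * σ ^ 2)) := by
  classical
  have hp0 : 0 < p := by linarith
  have hq0 : 0 < 1 - p := by linarith
  set A : Set (EuclideanSpace ℝ (Fin d)) :=
    {x | p * gaussPdf d (-μv) σ x ≤ gaussPdf d μv σ x} with hA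
  set B : Set (EuclideanSpace ℝ (Fin d)) :=
    {x | (1 - p) * gaussPdf d ((3 : ℝ) • μv) σ x ≤ gaussPdf d μv σ x} with hB
  set C : Set (EuclideanSpace ℝ (Fin d)) :=
    {x | ‖x - μv‖ ≤ ‖x - (-(4 * p - 3)) • μv‖} with hC
  have mA : MeasurableSet A := measurableSet_le
    (continuous_const.mul (gaussPdf_continuous (-μv) σ)).measurable
    (gaussPdf_continuous μv σ).measurable
  have mB : MeasurableSet B := measurableSet_le
    (continuous_const.mul (gaussPdf_continuous _ σ)).measurable
    (gaussPdf_continuous μv σ).measurable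
  have mC : MeasurableSet C := measurableSet_le
    ((continuous_id.sub continuous_const).norm).measurable
    ((continuous_id.sub continuous_const).norm).measurable
  have errL := Dmix_err (σ := σ) hσ hp0.le hp2.le μv mC
    (h := hLDA d μv p) (fun x hx => if_pos hx) (fun x hx => if_neg hx)
  have errM := Dmix_err (σ := σ) hσ hp0.le hp2.le μv (mA.inter mB)
    (h := hMDA d μv σ p) (fun x hx => if_pos ⟨hx.1, hx.2⟩)
    (fun x hx => if_neg (fun hcon => hx ⟨hcon.1, hcon.2⟩))
  rw [errL, errM]
  -- subset facts
  have hBC : Bᶜ ⊆ C := fun x hx => ptBC hσ hμ hp1 hp2 hx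
  have hCA : C ⊆ A := fun x hx => ptCA hσ hμ hp1 hp2 hx
  have hCdec : C = (C ∩ B) ∪ Bᶜ := by
    apply Subset.antisymm
    · intro x hx
      by_cases hb : x ∈ B
      · exact Or.inl ⟨hx, hb⟩
      · exact Or.inr hb
    · rintro x (⟨hx, -⟩ | hx)
      · exact hx
      · exact hBC hx
  have hABdec : A ∩ B = (C ∩ B) ∪ (A ∩ Cᶜ) := by
    apply Subset.antisymm
    · rintro x ⟨hxA, hxB⟩
      by_cases hc : x ∈ C
      · exact Or.inl ⟨hc, hxB⟩
      · exact Or.inr ⟨hxA, hc⟩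
    · rintro x (⟨hc, hb⟩ | ⟨ha, hc⟩)
      · exact ⟨hCA hc, hb⟩
      · refine ⟨ha, ?_⟩
        by_contra hb
        exact hc (hBC hb)
  have hd1 : Disjoint (C ∩ B) Bᶜ := disjoint_compl_right.mono_left inter_subset_right
  have hd2 : Disjoint (C ∩ B) (A ∩ Cᶜ) :=
    disjoint_compl_right.mono inter_subset_left inter_subset_right
  -- splits
  have split1C : (gauss d μv σ C).toReal
      = (gauss d μv σ (C ∩ B)).toReal + (gauss d μv σ Bᶜ).toReal := by
    have := gauss_union_toReal hσ μv hd1 mB.compl; rw [← hCdec] at this; exact this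
  have split1AB : (gauss d μv σ (A ∩ B)).toReal
      = (gauss d μv σ (C ∩ B)).toReal + (gauss d μv σ (A ∩ Cᶜ)).toReal := by
    have := gauss_union_toReal hσ μv hd2 (mA.inter mC.compl); rw [← hABdec] at this; exact this
  have splitmC : (gauss d (-μv) σ C).toReal
      = (gauss d (-μv) σ (C ∩ B)).toReal + (gauss d (-μv) σ Bᶜ).toReal := by
    have := gauss_union_toReal hσ (-μv) hd1 mB.compl; rw [← hCdec] at this; exact this
  have splitmAB : (gauss d (-μv) σ (A ∩ B)).toReal
      = (gauss d (-μv) σ (C ∩ B)).toReal + (gauss d (-μv) σ (A ∩ Cᶜ)).toReal := by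
    have := gauss_union_toReal hσ (-μv) hd2 (mA.inter mC.compl); rw [← hABdec] at this; exact this
  have split3C : (gauss d ((3:ℝ) • μv) σ C).toReal
      = (gauss d ((3:ℝ) • μv) σ (C ∩ B)).toReal + (gauss d ((3:ℝ) • μv) σ Bᶜ).toReal := by
    have := gauss_union_toReal hσ ((3:ℝ) • μv) hd1 mB.compl; rw [← hCdec] at this; exact this
  have split3AB : (gauss d ((3:ℝ) • μv) σ (A ∩ B)).toReal
      = (gauss d ((3:ℝ) • μv) σ (C ∩ B)).toReal + (gauss d ((3:ℝ) • μv) σ (A ∩ Cᶜ)).toReal := by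
    have := gauss_union_toReal hσ ((3:ℝ) • μv) hd2 (mA.inter mC.compl); rw [← hABdec] at this
    exact this
  -- complements
  have comp1C : (gauss d μv σ Cᶜ).toReal = 1 - (gauss d μv σ C).toReal :=
    gauss_compl_toReal hσ μv mC
  have comp1AB : (gauss d μv σ (A ∩ B)ᶜ).toReal = 1 - (gauss d μv σ (A ∩ B)).toReal :=
    gauss_compl_toReal hσ μv (mA.inter mB)
  have comp3B : (gauss d ((3:ℝ) • μv) σ Bᶜ).toReal = 1 - (gauss d ((3:ℝ) • μv) σ B).toReal :=
    gauss_compl_toReal hσ ((3:ℝ) • μv) mB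
  -- quantitative bounds
  set eK := Real.exp (-‖μv‖ ^ 2 / (2 * σ ^ 2)) with heK
  have heK0 : 0 < eK := Real.exp_pos _
  set c2 := Real.sqrt (1 - p) * eK with hc2def
  have hc2 : 0 < c2 := mul_pos (Real.sqrt_pos.2 hq0) heK0
  have b1 : p * (gauss d (-μv) σ (A ∩ Cᶜ)).toReal
      ≤ 1 * (gauss d μv σ (A ∩ Cᶜ)).toReal :=
    gauss_comp_toReal hσ hp0.le zero_le_one _ _ (mA.inter mC.compl)
      (fun x hx => by rw [one_mul]; exact hx.1)
  have b2 : 1 * (gauss d μv σ Bᶜ).toReal ≤ c2 * (gauss d ((2:ℝ) • μv) σ Bᶜ).toReal :=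
    gauss_comp_toReal hσ zero_le_one hc2.le _ _ mB.compl
      (fun x hx => by rw [one_mul]; exact ptB1 hσ hp2 hx)
  have b3 : (1 - p) * (gauss d ((3:ℝ) • μv) σ B).toReal
      ≤ c2 * (gauss d ((2:ℝ) • μv) σ B).toReal :=
    gauss_comp_toReal hσ hq0.le hc2.le _ _ mB (fun x hx => ptB3 hσ hp2 hx)
  set e3 := Real.exp (-(3 * ‖μv‖ ^ 2) / (2 * σ ^ 2)) with he3def
  have b4 : 1 * (gauss d ((3:ℝ) • μv) σ (A ∩ Cᶜ)).toReal
      ≤ e3 * (gauss d ((2:ℝ) • μv) σ (A ∩ Cᶜ)).toReal :=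
    gauss_comp_toReal hσ zero_le_one (Real.exp_pos _).le _ _ (mA.inter mC.compl)
      (fun x hx => by rw [one_mul]; exact ptC3 hσ hμ hp1 hp2 hx.2)
  have hm : 0 < ‖μv‖ ^ 2 := pow_pos (norm_pos_iff.2 hμ) 2
  have hs2 : 0 < 2 * σ ^ 2 := by positivity
  have he3K : e3 ≤ eK := by
    rw [he3def, heK]
    apply Real.exp_le_exp.2
    rw [div_le_div_iff₀ hs2 hs2]
    nlinarith
  -- chains
  have B2 : (gauss d μv σ Bᶜ).toReal ≤ c2 := by
    have h1 : c2 * (gauss d ((2:ℝ) • μv) σ Bᶜ).toReal ≤ c2 * 1 :=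
      mul_le_mul_of_nonneg_left (gauss_toReal_le_one hσ _ _) hc2.le
    rw [one_mul] at b2; linarith
  have B3 : (1 - p) * (gauss d ((3:ℝ) • μv) σ B).toReal ≤ c2 := by
    have h1 : c2 * (gauss d ((2:ℝ) • μv) σ B).toReal ≤ c2 * 1 :=
      mul_le_mul_of_nonneg_left (gauss_toReal_le_one hσ _ _) hc2.le
    linarith
  have B4 : (gauss d ((3:ℝ) • μv) σ (A ∩ Cᶜ)).toReal ≤ eK := by
    have h1 : e3 * (gauss d ((2:ℝ) • μv) σ (A ∩ Cᶜ)).toReal ≤ e3 * 1 :=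
      mul_le_mul_of_nonneg_left (gauss_toReal_le_one hσ _ _) (Real.exp_pos _).le
    rw [one_mul] at b4; linarith
  have B5 : (1 - p) * (gauss d ((3:ℝ) • μv) σ (A ∩ Cᶜ)).toReal ≤ (1/2) * eK := by
    have h1 : (1 - p) * (gauss d ((3:ℝ) • μv) σ (A ∩ Cᶜ)).toReal ≤ (1 - p) * eK :=
      mul_le_mul_of_nonneg_left B4 hq0.le
    have h2 : (1 - p) * eK ≤ (1/2) * eK :=
      mul_le_mul_of_nonneg_right (by linarith) heK0.le
    linarith
  have hsq34 : Real.sqrt (1 - p) ≤ 3/4 := by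
    have h1 : (1 - p : ℝ) ≤ 9/16 := by linarith
    calc Real.sqrt (1 - p) ≤ Real.sqrt (9/16) := Real.sqrt_le_sqrt h1
      _ = 3/4 := by
        rw [show (9/16 : ℝ) = (3/4)^2 by norm_num, Real.sqrt_sq (by norm_num)]
  have hc2' : c2 ≤ (3/4) * eK := by
    rw [hc2def]
    exact mul_le_mul_of_nonneg_right hsq34 heK0.le
  have hgm0 : (0:ℝ) ≤ (gauss d (-μv) σ Bᶜ).toReal := ENNReal.toReal_nonneg
  rw [one_mul] at b1
  have hm1 : p * (gauss d (-μv) σ C).toReal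
      = p * (gauss d (-μv) σ (C ∩ B)).toReal + p * (gauss d (-μv) σ Bᶜ).toReal := by
    rw [splitmC]; ring
  have hm2 : p * (gauss d (-μv) σ (A ∩ B)).toReal
      = p * (gauss d (-μv) σ (C ∩ B)).toReal + p * (gauss d (-μv) σ (A ∩ Cᶜ)).toReal := by
    rw [splitmAB]; ring
  have hq1 : (1 - p) * (gauss d ((3:ℝ) • μv) σ C).toReal
      = (1 - p) * (gauss d ((3:ℝ) • μv) σ (C ∩ B)).toReal
        + (1 - p) * (gauss d ((3:ℝ) • μv) σ Bᶜ).toReal := by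
    rw [split3C]; ring
  have hq2 : (1 - p) * (gauss d ((3:ℝ) • μv) σ (A ∩ B)).toReal
      = (1 - p) * (gauss d ((3:ℝ) • μv) σ (C ∩ B)).toReal
        + (1 - p) * (gauss d ((3:ℝ) • μv) σ (A ∩ Cᶜ)).toReal := by
    rw [split3AB]; ring
  have hq3 : (1 - p) * (gauss d ((3:ℝ) • μv) σ Bᶜ).toReal
      = (1 - p) - (1 - p) * (gauss d ((3:ℝ) • μv) σ B).toReal := by
    rw [comp3B]; ring
  have hp5 : (0:ℝ) ≤ p * (gauss d (-μv) σ Bᶜ).toReal := mul_nonneg hp0.le hgm0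
  linarith
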